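/- arXiv:1612.04103 — 3 statements merged into one kernel-verified Lean document; each statement's English description precedes it below -/
import Mathlib

section
/- Let ω > 0, let Q ∈ ℕ, and let λ ∈ ℂ satisfy cos(λω) ≠ 0 (equivalently, λ ≠ (k + 1/2)π/ω for every k ∈ ℤ). Let v₀, …, v_Q : ℝ → ℂ be twice continuously differentiable functions, and set v_{Q+1} = v_{Q+2} = 0. Assume that for every 0 ≤ q ≤ Q and every θ ∈ [0, ω], v_q''(θ) + λ²·v_q(θ) + 2λ(q+1)·v_{q+1}(θ) + (q+2)(q+1)·v_{q+2}(θ) = 0, and that v_q(0) = 0 and v_q'(ω) = 0 for every 0 ≤ q ≤ Q. Then v_q vanishes identically on [0, ω] for every 0 ≤ q ≤ Q. -/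
open Set

private lemma hasDerivAt_coscomp (l : ℂ) (θ : ℝ) :
    HasDerivAt (fun t : ℝ => Complex.cos (l * t)) (-Complex.sin (l * θ) * l) θ := by
  have h1 : HasDerivAt (fun z : ℂ => Complex.cos (l * z)) (-Complex.sin (l * θ) * l) (θ:ℂ) := by
    simpa [Function.comp_def] using (Complex.hasDerivAt_cos (l * θ)).comp (θ:ℂ) ((hasDerivAt_id (θ:ℂ)).const_mul l)
  exact h1.comp_ofReal

private lemma hasDerivAt_sincomp (l : ℂ) (θ : ℝ) :
    HasDerivAt (fun t : ℝ => Complex.sin (l * t)) (Complex.cos (l * θ) * l) θ := by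
  have h1 : HasDerivAt (fun z : ℂ => Complex.sin (l * z)) (Complex.cos (l * θ) * l) (θ:ℂ) := by
    simpa [Function.comp_def] using (Complex.hasDerivAt_sin (l * θ)).comp (θ:ℂ) ((hasDerivAt_id (θ:ℂ)).const_mul l)
  exact h1.comp_ofReal

private lemma key (ω : ℝ) (hω : 0 < ω) (l : ℂ)
    (hl : Complex.cos (l * (ω : ℂ)) ≠ 0) (u : ℝ → ℂ) (hu : ContDiff ℝ 2 u)
    (hode : ∀ θ ∈ Icc (0:ℝ) ω, deriv (deriv u) θ + l ^ 2 * u θ = 0)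
    (h0 : u 0 = 0) (hN : deriv u ω = 0) :
    ∀ θ ∈ Icc (0:ℝ) ω, u θ = 0 := by
  have hud : Differentiable ℝ u := hu.differentiable (by norm_num)
  have hu1 : ContDiff ℝ 1 (deriv u) := by
    have := (contDiff_succ_iff_deriv (n := 1)).mp (by exact_mod_cast hu)
    exact this.2.2
  have hud' : Differentiable ℝ (deriv u) := hu1.differentiable one_ne_zero
  have hccos : Continuous fun t : ℝ => Complex.cos (l * t) :=
    Complex.continuous_cos.comp (continuous_const.mul Complex.continuous_ofReal)
  have hcsin : Continuous fun t : ℝ => Complex.sin (l * t) :=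
    Complex.continuous_sin.comp (continuous_const.mul Complex.continuous_ofReal)
  have hAd : ∀ θ ∈ Icc (0:ℝ) ω, HasDerivAt
      (fun t => deriv u t * Complex.cos (l * t) + l * u t * Complex.sin (l * t)) 0 θ := by
    intro θ hθ
    have h := (((hud' θ).hasDerivAt.mul (hasDerivAt_coscomp l θ)).add
      ((((hud θ).hasDerivAt.const_mul l)).mul (hasDerivAt_sincomp l θ)))
    refine h.congr_deriv ?_
    have h2 := hode θ hθ
    linear_combination Complex.cos (l * θ) * h2
  have hBd : ∀ θ ∈ Icc (0:ℝ) ω, HasDerivAt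
      (fun t => deriv u t * Complex.sin (l * t) - l * u t * Complex.cos (l * t)) 0 θ := by
    intro θ hθ
    have h := (((hud' θ).hasDerivAt.mul (hasDerivAt_sincomp l θ)).sub
      ((((hud θ).hasDerivAt.const_mul l)).mul (hasDerivAt_coscomp l θ)))
    refine h.congr_deriv ?_
    have h2 := hode θ hθ
    linear_combination Complex.sin (l * θ) * h2
  have hAc : ∀ θ ∈ Icc (0:ℝ) ω,
      deriv u θ * Complex.cos (l * θ) + l * u θ * Complex.sin (l * θ)
        = deriv u 0 * Complex.cos (l * 0) + l * u 0 * Complex.sin (l * 0) := by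
    apply constant_of_has_deriv_right_zero
    · exact ((hud'.continuous.mul hccos).add
        ((continuous_const.mul hud.continuous).mul hcsin)).continuousOn
    · intro x hx
      exact (hAd x ⟨hx.1, le_of_lt hx.2⟩).hasDerivWithinAt
  have hBc : ∀ θ ∈ Icc (0:ℝ) ω,
      deriv u θ * Complex.sin (l * θ) - l * u θ * Complex.cos (l * θ)
        = deriv u 0 * Complex.sin (l * 0) - l * u 0 * Complex.cos (l * 0) := by
    apply constant_of_has_deriv_right_zero
    · exact ((hud'.continuous.mul hcsin).sub
        ((continuous_const.mul hud.continuous).mul hccos)).continuousOn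
    · intro x hx
      exact (hBd x ⟨hx.1, le_of_lt hx.2⟩).hasDerivWithinAt
  have hmem : ω ∈ Icc (0:ℝ) ω := ⟨le_of_lt hω, le_rfl⟩
  -- B is identically 0
  have hBc' : ∀ θ ∈ Icc (0:ℝ) ω,
      deriv u θ * Complex.sin (l * θ) - l * u θ * Complex.cos (l * θ) = 0 := by
    intro θ hθ
    rw [hBc θ hθ, h0]
    simp
  have hluω : l * u ω = 0 := by
    have := hBc' ω hmem
    rw [hN, zero_mul, zero_sub, neg_eq_zero] at this
    exact (mul_eq_zero.mp this).resolve_right hl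
  have hA0 : deriv u 0 = 0 := by
    have h := hAc ω hmem
    simp only [Complex.ofReal_zero, mul_zero, Complex.cos_zero, Complex.sin_zero, mul_one,
      h0, zero_mul, add_zero] at h
    linear_combination -h + Complex.cos (l * (ω:ℂ)) * hN + Complex.sin (l * (ω:ℂ)) * hluω
  have hAc' : ∀ θ ∈ Icc (0:ℝ) ω,
      deriv u θ * Complex.cos (l * θ) + l * u θ * Complex.sin (l * θ) = 0 := by
    intro θ hθ
    rw [hAc θ hθ, hA0, h0]
    simp
  by_cases hlz : l = 0
  · -- l = 0 : A θ = deriv u θ = 0, so u constant = u 0 = 0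
    have hder : ∀ θ ∈ Icc (0:ℝ) ω, deriv u θ = 0 := by
      intro θ hθ
      have := hAc' θ hθ
      simpa [hlz] using this
    have : ∀ θ ∈ Icc (0:ℝ) ω, u θ = u 0 := by
      apply constant_of_has_deriv_right_zero hud.continuous.continuousOn
      intro x hx
      have := (hud x).hasDerivAt
      rw [hder x ⟨hx.1, le_of_lt hx.2⟩] at this
      exact this.hasDerivWithinAt
    intro θ hθ
    rw [this θ hθ, h0]
  · intro θ hθ
    have hA := hAc' θ hθ
    have hB := hBc' θ hθ
    have hpyth := Complex.sin_sq_add_cos_sq (l * θ)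
    have : l * u θ = 0 := by
      linear_combination Complex.sin (l * θ) * hA - Complex.cos (l * θ) * hB
        - l * u θ * hpyth
    exact (mul_eq_zero.mp this).resolve_left hlz

/-- The cascade of ODEs for the angular profiles of a separated singular function
`Σ_q r^λ (log r)^q v_q(θ)` in the kernel of the sector Laplacian with Dirichlet condition
at `θ = 0` and Neumann condition at `θ = ω`: if `cos (λ ω) ≠ 0`, all profiles vanish. -/
theorem cascade_profiles_vanish (ω : ℝ) (hω : 0 < ω) (Q : ℕ) (l : ℂ)
    (hl : Complex.cos (l * (ω : ℂ)) ≠ 0)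
    (v : ℕ → ℝ → ℂ)
    (hreg : ∀ q ≤ Q, ContDiff ℝ 2 (v q))
    (htop1 : v (Q + 1) = 0) (htop2 : v (Q + 2) = 0)
    (hode : ∀ q ≤ Q, ∀ θ ∈ Icc (0:ℝ) ω,
      deriv (deriv (v q)) θ + l ^ 2 * v q θ
        + 2 * l * ((q : ℂ) + 1) * v (q + 1) θ
        + ((q : ℂ) + 2) * ((q : ℂ) + 1) * v (q + 2) θ = 0)
    (hbc : ∀ q ≤ Q, v q 0 = 0 ∧ deriv (v q) ω = 0) :
    ∀ q ≤ Q, ∀ θ ∈ Icc (0:ℝ) ω, v q θ = 0 := by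
  -- step: if the two next profiles vanish on the interval, so does this one
  have step : ∀ q ≤ Q, (∀ θ ∈ Icc (0:ℝ) ω, v (q + 1) θ = 0) →
      (∀ θ ∈ Icc (0:ℝ) ω, v (q + 2) θ = 0) → ∀ θ ∈ Icc (0:ℝ) ω, v q θ = 0 := by
    intro q hq h1 h2
    apply key ω hω l hl (v q) (hreg q hq)
    · intro θ hθ
      have := hode q hq θ hθ
      rw [h1 θ hθ, h2 θ hθ] at this
      linear_combination this
    · exact (hbc q hq).1
    · exact (hbc q hq).2
  -- downward induction, phrased as strong induction on the distance from the top
  have main : ∀ k, k ≤ Q + 2 → ∀ θ ∈ Icc (0:ℝ) ω, v (Q + 2 - k) θ = 0 := by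
    intro k
    induction k using Nat.strong_induction_on with
    | _ k ih =>
      intro hk θ hθ
      match k, ih, hk with
      | 0, _, _ => simp [htop2]
      | 1, _, _ => show v (Q + 1) θ = 0; simp [htop1]
      | (m + 2), ih, hk =>
        have hqle : Q + 2 - (m + 2) ≤ Q := by omega
        have e1 : Q + 2 - (m + 2) + 1 = Q + 2 - (m + 1) := by omega
        have e2 : Q + 2 - (m + 2) + 2 = Q + 2 - m := by omega
        refine step _ hqle ?_ ?_ θ hθ
        · intro θ' hθ'
          rw [e1]; exact ih (m + 1) (by omega) (by omega) θ' hθ'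
        · intro θ' hθ'
          rw [e2]; exact ih m (by omega) (by omega) θ' hθ'
  intro q hq θ hθ
  have := main (Q + 2 - q) (by omega) θ hθ
  rwa [Nat.sub_sub_self (by omega)] at this
end

section
/- Let n ≥ 1, let g ∈ ℝ, and let U ⊆ ℝ × ℝⁿ be open. Let v : ℝ × ℝⁿ → ℝⁿ and p : ℝ × ℝⁿ → ℝ be three times continuously differentiable, and suppose that at every point of U the Euler equations hold, ∂_t v_k + Σ_j v_j ∂_j v_k = −∂_k p − g·δ_{kn} for every 1 ≤ k ≤ n, together with Σ_j ∂_j v_j = 0 on U. Then at every point of U: ∂_t (Δp) + Σ_j v_j ∂_j (Δp) = 2 Σ_{i,j} ∂_i ∂_j p · ∂_j v_i + 2 Σ_{i,j,k} ∂_i v_j · ∂_j v_k · ∂_k v_i. -/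
section helpers
variable {E : Type*} [NormedAddCommGroup E] [NormedSpace ℝ E]

noncomputable def pd (w : E) (f : E → ℝ) (x : E) : ℝ := fderiv ℝ f x w

lemma pd_congr {f h : E → ℝ} {U : Set E} (hU : IsOpen U) (hfh : ∀ r ∈ U, f r = h r)
    {x : E} (hx : x ∈ U) (w : E) : pd w f x = pd w h x := by
  have hev : f =ᶠ[nhds x] h := by
    filter_upwards [hU.mem_nhds hx] with y hy using hfh y hy
  unfold pd
  rw [hev.fderiv_eq]

lemma pd_contDiff {m M : WithTop ℕ∞} {f : E → ℝ} (h : m + 1 ≤ M)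
    (hf : ContDiff ℝ M f) (w : E) : ContDiff ℝ m (pd w f) := by
  have h1 : ContDiff ℝ m (fderiv ℝ f) := hf.fderiv_right h
  exact (ContinuousLinearMap.apply ℝ ℝ w).contDiff.comp h1

lemma pd_add {f h : E → ℝ} {x : E} (hf : DifferentiableAt ℝ f x)
    (hh : DifferentiableAt ℝ h x) (w : E) :
    pd w (fun r => f r + h r) x = pd w f x + pd w h x := by
  unfold pd; rw [fderiv_fun_add hf hh]; rfl

lemma pd_mul {f h : E → ℝ} {x : E} (hf : DifferentiableAt ℝ f x)
    (hh : DifferentiableAt ℝ h x) (w : E) :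
    pd w (fun r => f r * h r) x = pd w f x * h x + f x * pd w h x := by
  unfold pd; rw [fderiv_fun_mul hf hh]; simp; ring

lemma pd_sum {ι : Type*} (s : Finset ι) {f : ι → E → ℝ} {x : E}
    (hf : ∀ i ∈ s, DifferentiableAt ℝ (f i) x) (w : E) :
    pd w (fun r => ∑ i ∈ s, f i r) x = ∑ i ∈ s, pd w (f i) x := by
  unfold pd; rw [fderiv_fun_sum hf]; simp

lemma pd_neg (f : E → ℝ) (x : E) (w : E) :
    pd w (fun r => -f r) x = -pd w f x := by
  unfold pd; rw [fderiv_fun_neg]; simp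

lemma pd_const (c : ℝ) (x : E) (w : E) : pd w (fun _ => c) x = 0 := by
  unfold pd; rw [fderiv_fun_const]; simp

lemma pd_neg_sub_const {f : E → ℝ} {x : E} (c : ℝ) (w : E) :
    pd w (fun r => -f r - c) x = -pd w f x := by
  unfold pd; rw [fderiv_sub_const, fderiv_fun_neg]; simp

lemma pd_comm {f : E → ℝ} {x : E} (hf : ContDiffAt ℝ 2 f x) (w₁ w₂ : E) :
    pd w₁ (pd w₂ f) x = pd w₂ (pd w₁ f) x := by
  have hd : DifferentiableAt ℝ (fderiv ℝ f) x :=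
    (hf.fderiv_right (m := 1) (by norm_num)).differentiableAt one_ne_zero
  have key : ∀ w : E, fderiv ℝ (pd w f) x
      = (ContinuousLinearMap.apply ℝ ℝ w).comp (fderiv ℝ (fderiv ℝ f) x) := by
    intro w
    exact (((ContinuousLinearMap.apply ℝ ℝ w).hasFDerivAt).comp x hd.hasFDerivAt).fderiv
  have hs := hf.isSymmSndFDerivAt (by simp)
  show fderiv ℝ (pd w₂ f) x w₁ = fderiv ℝ (pd w₁ f) x w₂
  rw [key w₂, key w₁]
  simpa using hs w₁ w₂

end helpers

section euler
variable {n : ℕ} {v : ℝ × (Fin n → ℝ) → Fin n → ℝ} {p : ℝ × (Fin n → ℝ) → ℝ}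
  {U : Set (ℝ × (Fin n → ℝ))}

noncomputable def exd {n : ℕ} (i : Fin n) : ℝ × (Fin n → ℝ) := (0, Pi.single i 1)
noncomputable def etd (n : ℕ) : ℝ × (Fin n → ℝ) := (1, 0)

-- smoothness kit
lemma vk3 (hv : ContDiff ℝ 3 v) (k : Fin n) : ContDiff ℝ 3 (fun r => v r k) :=
  contDiff_pi.1 hv k

lemma vkd (hv : ContDiff ℝ 3 v) (k : Fin n) : Differentiable ℝ (fun r => v r k) :=
  (vk3 hv k).differentiable (by norm_num)

lemma pdv2 (hv : ContDiff ℝ 3 v) (w : ℝ × (Fin n → ℝ)) (k : Fin n) :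
    ContDiff ℝ 2 (pd w (fun r => v r k)) :=
  pd_contDiff (by norm_num) (vk3 hv k) w

lemma pdv2d (hv : ContDiff ℝ 3 v) (w : ℝ × (Fin n → ℝ)) (k : Fin n) :
    Differentiable ℝ (pd w (fun r => v r k)) :=
  (pdv2 hv w k).differentiable (by norm_num)

lemma pdv1d (hv : ContDiff ℝ 3 v) (w w' : ℝ × (Fin n → ℝ)) (k : Fin n) :
    Differentiable ℝ (pd w' (pd w (fun r => v r k))) :=
  (pd_contDiff (m := 1) (by norm_num) (pdv2 hv w k) w').differentiable one_ne_zero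

lemma pdp2 (hp : ContDiff ℝ 3 p) (w : ℝ × (Fin n → ℝ)) :
    ContDiff ℝ 2 (pd w p) :=
  pd_contDiff (by norm_num) hp w

lemma pdp2d (hp : ContDiff ℝ 3 p) (w : ℝ × (Fin n → ℝ)) :
    Differentiable ℝ (pd w p) :=
  (pdp2 hp w).differentiable (by norm_num)

lemma pdp1d (hp : ContDiff ℝ 3 p) (w w' : ℝ × (Fin n → ℝ)) :
    Differentiable ℝ (pd w' (pd w p)) :=
  (pd_contDiff (m := 1) (by norm_num) (pdp2 hp w) w').differentiable one_ne_zero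

-- differentiated Euler equations
lemma euler_diff (hU : IsOpen U) (hv : ContDiff ℝ 3 v) (hp : ContDiff ℝ 3 p)
    (C : Fin n → ℝ)
    (heuler : ∀ q ∈ U, ∀ k : Fin n,
      pd (etd n) (fun r => v r k) q + ∑ j, v q j * pd (exd j) (fun r => v r k) q
        = -pd (exd k) p q - C k) :
    ∀ q ∈ U, ∀ k : Fin n, ∀ w : ℝ × (Fin n → ℝ),
      pd w (pd (etd n) (fun r => v r k)) q
        + ∑ j, (pd w (fun r => v r j) q * pd (exd j) (fun r => v r k) q
            + v q j * pd w (pd (exd j) (fun r => v r k)) q)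
      = -pd w (pd (exd k) p) q := by
  intro q hq k w
  have h1 : pd w (fun r => pd (etd n) (fun s => v s k) r
        + ∑ j, v r j * pd (exd j) (fun s => v s k) r) q
      = pd w (fun r => -pd (exd k) p r - C k) q :=
    pd_congr hU (fun r hr => heuler r hr k) hq w
  rw [pd_neg_sub_const] at h1
  rw [pd_add ((pdv2d hv (etd n) k) q)
      (DifferentiableAt.fun_sum fun j _ => ((vkd hv j) q).fun_mul ((pdv2d hv (exd j) k) q))] at h1
  rw [pd_sum _ (fun j _ => ((vkd hv j) q).fun_mul ((pdv2d hv (exd j) k) q))] at h1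
  rw [← h1]
  congr 1
  exact Finset.sum_congr rfl fun j _ => (pd_mul ((vkd hv j) q) ((pdv2d hv (exd j) k) q) w).symm

-- differentiated divergence-free condition
lemma div_diff (hU : IsOpen U) (hv : ContDiff ℝ 3 v)
    (hdiv : ∀ q ∈ U, ∑ j, pd (exd j) (fun r => v r j) q = 0) :
    ∀ q ∈ U, ∀ w : ℝ × (Fin n → ℝ),
      ∑ j, pd w (pd (exd j) (fun r => v r j)) q = 0 := by
  intro q hq w
  have h1 : pd w (fun r => ∑ j, pd (exd j) (fun s => v s j) r) q
      = pd w (fun _ => (0 : ℝ)) q :=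
    pd_congr hU (fun r hr => hdiv r hr) hq w
  rw [pd_sum _ (fun j _ => (pdv2d hv (exd j) j) q), pd_const] at h1
  exact h1


lemma vk2at (hv : ContDiff ℝ 3 v) (k : Fin n) (q : ℝ × (Fin n → ℝ)) :
    ContDiffAt ℝ 2 (fun r => v r k) q :=
  ((vk3 hv k).of_le (by norm_num)).contDiffAt

lemma poisson (hU : IsOpen U) (hv : ContDiff ℝ 3 v) (hp : ContDiff ℝ 3 p)
    (C : Fin n → ℝ)
    (heuler : ∀ q ∈ U, ∀ k : Fin n,
      pd (etd n) (fun r => v r k) q + ∑ j, v q j * pd (exd j) (fun r => v r k) q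
        = -pd (exd k) p q - C k)
    (hdiv : ∀ q ∈ U, ∑ j, pd (exd j) (fun r => v r j) q = 0) :
    ∀ r ∈ U, ∑ i, pd (exd i) (pd (exd i) p) r
      = -∑ j, ∑ k, pd (exd j) (fun s => v s k) r * pd (exd k) (fun s => v s j) r := by
  intro r hr
  have hsplit : ∑ k, (pd (exd k) (pd (etd n) (fun s => v s k)) r
        + ∑ j, (pd (exd k) (fun s => v s j) r * pd (exd j) (fun s => v s k) r
            + v r j * pd (exd k) (pd (exd j) (fun s => v s k)) r))
      = ∑ k, -pd (exd k) (pd (exd k) p) r :=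
    Finset.sum_congr rfl fun k _ => euler_diff hU hv hp C heuler r hr k (exd k)
  simp only [Finset.sum_add_distrib, Finset.sum_neg_distrib] at hsplit
  have e1 : ∑ k, pd (exd k) (pd (etd n) (fun s => v s k)) r = 0 := by
    rw [Finset.sum_congr rfl fun k (_ : k ∈ Finset.univ) =>
      pd_comm (vk2at hv k r) (exd k) (etd n)]
    exact div_diff hU hv hdiv r hr (etd n)
  have e3 : ∑ k, ∑ j, v r j * pd (exd k) (pd (exd j) (fun s => v s k)) r = 0 := by
    rw [Finset.sum_comm]
    have inner0 : ∀ j : Fin n,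
        ∑ k, v r j * pd (exd k) (pd (exd j) (fun s => v s k)) r = 0 := by
      intro j
      rw [← Finset.mul_sum]
      rw [Finset.sum_congr rfl fun k (_ : k ∈ Finset.univ) =>
        pd_comm (vk2at hv k r) (exd k) (exd j)]
      rw [div_diff hU hv hdiv r hr (exd j), mul_zero]
    simp [inner0]
  rw [e1, e3] at hsplit
  have : ∑ k, ∑ j, pd (exd k) (fun s => v s j) r * pd (exd j) (fun s => v s k) r
      = ∑ j, ∑ k, pd (exd j) (fun s => v s k) r * pd (exd k) (fun s => v s j) r := by
    rw [Finset.sum_comm]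
  linarith

lemma material_second (hU : IsOpen U) (hv : ContDiff ℝ 3 v) (hp : ContDiff ℝ 3 p)
    (C : Fin n → ℝ)
    (heuler : ∀ q ∈ U, ∀ k : Fin n,
      pd (etd n) (fun r => v r k) q + ∑ j, v q j * pd (exd j) (fun r => v r k) q
        = -pd (exd k) p q - C k) :
    ∀ q ∈ U, ∀ j k : Fin n,
      pd (etd n) (pd (exd j) (fun s => v s k)) q
        + ∑ m, v q m * pd (exd m) (pd (exd j) (fun s => v s k)) q
      = -pd (exd j) (pd (exd k) p) q
        - ∑ m, pd (exd j) (fun s => v s m) q * pd (exd m) (fun s => v s k) q := by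
  intro q hq j k
  have hE := euler_diff hU hv hp C heuler q hq k (exd j)
  simp only [Finset.sum_add_distrib] at hE
  have c1 : pd (exd j) (pd (etd n) (fun s => v s k)) q
      = pd (etd n) (pd (exd j) (fun s => v s k)) q :=
    pd_comm (vk2at hv k q) (exd j) (etd n)
  have c2 : ∑ m, v q m * pd (exd j) (pd (exd m) (fun s => v s k)) q
      = ∑ m, v q m * pd (exd m) (pd (exd j) (fun s => v s k)) q :=
    Finset.sum_congr rfl fun m _ => by
      rw [pd_comm (vk2at hv k q) (exd j) (exd m)]
  rw [c1, c2] at hE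
  linarith

end euler


lemma sum2_symm {n : ℕ} (a f : Fin n → Fin n → ℝ) :
    ∑ j, ∑ k, (f j k * a k j + a j k * f k j) = 2 * ∑ j, ∑ k, f j k * a k j := by
  simp only [Finset.sum_add_distrib]
  have h : ∑ j, ∑ k, a j k * f k j = ∑ j, ∑ k, f j k * a k j := by
    rw [Finset.sum_comm]
    exact Finset.sum_congr rfl fun j _ => Finset.sum_congr rfl fun k _ => mul_comm _ _
  rw [h]; ring

lemma sum_comm3 {n : ℕ} (F : Fin n → Fin n → Fin n → ℝ) :
    ∑ m : Fin n, ∑ j : Fin n, ∑ k : Fin n, F m j k = ∑ j, ∑ k, ∑ m, F m j k := by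
  rw [Finset.sum_comm]
  exact Finset.sum_congr rfl fun j _ => Finset.sum_comm

lemma key_algebra {n : ℕ} (a b ce : Fin n → Fin n → ℝ)
    (cx : Fin n → Fin n → Fin n → ℝ) (vv : Fin n → ℝ)
    (hT : ∀ j k, ce j k + ∑ m, vv m * cx m j k = -b j k - ∑ m, a j m * a m k) :
    (-∑ j, ∑ k, (ce j k * a k j + a j k * ce k j))
      + ∑ m, vv m * -∑ j, ∑ k, (cx m j k * a k j + a j k * cx m k j)
    = 2 * (∑ i, ∑ j, b i j * a j i)
      + 2 * ∑ i, ∑ j, ∑ k, a i j * a j k * a k i := by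
  have hs2 : ∑ m, vv m * -∑ j, ∑ k, (cx m j k * a k j + a j k * cx m k j)
      = ∑ j, ∑ k, ∑ m, -(2 * (vv m * (cx m j k * a k j))) := by
    rw [← sum_comm3 (fun m j k => -(2 * (vv m * (cx m j k * a k j))))]
    refine Finset.sum_congr rfl fun m _ => ?_
    rw [sum2_symm]
    have : vv m * -(2 * ∑ j, ∑ k, cx m j k * a k j)
        = -(2 * ∑ j, ∑ k, vv m * (cx m j k * a k j)) := by
      simp only [← Finset.mul_sum]; ring
    rw [this]
    simp only [← Finset.sum_neg_distrib, Finset.mul_sum]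
  have hs1 : (-∑ j, ∑ k, (ce j k * a k j + a j k * ce k j))
      = ∑ j, ∑ k, -(2 * (ce j k * a k j)) := by
    rw [sum2_symm]
    simp only [← Finset.sum_neg_distrib, Finset.mul_sum]
  rw [hs1, hs2, ← Finset.sum_add_distrib]
  simp only [← Finset.sum_add_distrib]
  have hpt : ∀ j k : Fin n,
      -(2 * (ce j k * a k j)) + ∑ m, -(2 * (vv m * (cx m j k * a k j)))
      = 2 * (b j k * a k j) + 2 * ∑ m, a j m * a m k * a k j := by
    intro j k
    have e1 : ∑ m, -(2 * (vv m * (cx m j k * a k j)))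
        = -(2 * ((∑ m, vv m * cx m j k) * a k j)) := by
      rw [Finset.sum_neg_distrib, ← Finset.mul_sum]
      congr 2
      rw [Finset.sum_mul]
      exact Finset.sum_congr rfl fun m _ => by ring
    have e2 : (∑ m, a j m * a m k) * a k j = ∑ m, a j m * a m k * a k j := by
      rw [Finset.sum_mul]
    rw [e1]
    have h := hT j k
    linear_combination (-2 * a k j) * h + 2 * e2
  calc ∑ j, ∑ k, (-(2 * (ce j k * a k j)) + ∑ m, -(2 * (vv m * (cx m j k * a k j))))
      = ∑ j, ∑ k, (2 * (b j k * a k j) + 2 * ∑ m, a j m * a m k * a k j) :=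
        Finset.sum_congr rfl fun j _ => Finset.sum_congr rfl fun k _ => hpt j k
    _ = 2 * (∑ j, ∑ k, b j k * a k j) + 2 * ∑ j, ∑ k, ∑ m, a j m * a m k * a k j := by
        simp only [Finset.sum_add_distrib, Finset.mul_sum]
    _ = 2 * (∑ i, ∑ j, b i j * a j i) + 2 * ∑ i, ∑ j, ∑ k, a i j * a j k * a k i := by
        congr 1
        rw [show (∑ j, ∑ k, ∑ m, a j m * a m k * a k j : ℝ)
            = ∑ j : Fin n, ∑ m, ∑ k, a j m * a m k * a k j from
          Finset.sum_congr rfl fun j _ => Finset.sum_comm]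


open Set

/-- Time partial derivative of a function on `ℝ × ℝⁿ`. -/
noncomputable def pdt {n : ℕ} (f : ℝ × (Fin n → ℝ) → ℝ) (q : ℝ × (Fin n → ℝ)) : ℝ :=
  fderiv ℝ f q (1, 0)

/-- Spatial partial derivative in the `i`-th coordinate of a function on `ℝ × ℝⁿ`. -/
noncomputable def pdx {n : ℕ} (i : Fin n) (f : ℝ × (Fin n → ℝ) → ℝ)
    (q : ℝ × (Fin n → ℝ)) : ℝ :=
  fderiv ℝ f q (0, Pi.single i 1)

lemma pdt_eq_pd {n : ℕ} (f : ℝ × (Fin n → ℝ) → ℝ) : pdt f = pd (etd n) f := rfl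

lemma pdx_eq_pd {n : ℕ} (i : Fin n) (f : ℝ × (Fin n → ℝ) → ℝ) : pdx i f = pd (exd i) f := rfl

/-- Material derivative of the pressure Laplacian of an incompressible Euler flow:
`D_t Δp = 2 tr(D²p · Dv) + 2 tr((Dv)³)`. -/
theorem material_derivative_pressure_laplacian {n : ℕ} (hn : 1 ≤ n) (g : ℝ)
    (U : Set (ℝ × (Fin n → ℝ))) (hU : IsOpen U)
    (v : ℝ × (Fin n → ℝ) → Fin n → ℝ) (p : ℝ × (Fin n → ℝ) → ℝ)
    (hv : ContDiff ℝ 3 v) (hp : ContDiff ℝ 3 p)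
    (heuler : ∀ q ∈ U, ∀ k : Fin n,
      pdt (fun r => v r k) q + ∑ j, v q j * pdx j (fun r => v r k) q
        = -pdx k p q - (if (k : ℕ) = n - 1 then g else 0))
    (hdiv : ∀ q ∈ U, ∑ j, pdx j (fun r => v r j) q = 0) :
    ∀ q ∈ U,
      pdt (fun r => ∑ i, pdx i (pdx i p) r) q
        + ∑ j, v q j * pdx j (fun r => ∑ i, pdx i (pdx i p) r) q
      = 2 * ∑ i, ∑ j, pdx i (pdx j p) q * pdx j (fun r => v r i) q
        + 2 * ∑ i, ∑ j, ∑ k, pdx i (fun r => v r j) q * pdx j (fun r => v r k) q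
            * pdx k (fun r => v r i) q := by
  intro q hq
  simp only [pdt_eq_pd, pdx_eq_pd] at heuler hdiv ⊢
  have hpois := poisson hU hv hp (fun k => if (k : ℕ) = n - 1 then g else 0) heuler hdiv
  have hms := material_second hU hv hp (fun k => if (k : ℕ) = n - 1 then g else 0) heuler
  have hDp : ∀ w : ℝ × (Fin n → ℝ),
      pd w (fun r => ∑ i, pd (exd i) (pd (exd i) p) r) q
      = -∑ j, ∑ k, (pd w (pd (exd j) (fun s => v s k)) q * pd (exd k) (fun s => v s j) q
          + pd (exd j) (fun s => v s k) q * pd w (pd (exd k) (fun s => v s j)) q) := by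
    intro w
    rw [pd_congr hU hpois hq w, pd_neg]
    congr 1
    rw [pd_sum _ (fun j _ => DifferentiableAt.fun_sum
      (fun k _ => ((pdv2d hv (exd j) k) q).fun_mul ((pdv2d hv (exd k) j) q)))]
    refine Finset.sum_congr rfl fun j _ => ?_
    rw [pd_sum _ (fun k _ => ((pdv2d hv (exd j) k) q).fun_mul ((pdv2d hv (exd k) j) q))]
    exact Finset.sum_congr rfl fun k _ =>
      pd_mul ((pdv2d hv (exd j) k) q) ((pdv2d hv (exd k) j) q) w
  have hL2 : ∑ m, v q m * pd (exd m) (fun r => ∑ i, pd (exd i) (pd (exd i) p) r) q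
      = ∑ m, v q m * -∑ j, ∑ k,
          (pd (exd m) (pd (exd j) (fun s => v s k)) q * pd (exd k) (fun s => v s j) q
            + pd (exd j) (fun s => v s k) q * pd (exd m) (pd (exd k) (fun s => v s j)) q) :=
    Finset.sum_congr rfl fun m _ => by rw [hDp (exd m)]
  rw [hDp (etd n), hL2]
  exact key_algebra _ _ _ _ _ (hms q hq)
end

section
/- Let n ≥ 1, let g ∈ ℝ, and let U ⊆ ℝ × ℝⁿ be open. Let v : ℝ × ℝⁿ → ℝⁿ and p : ℝ × ℝⁿ → ℝ be three times continuously differentiable, and suppose that at every point of U the Euler equations hold, ∂_t v_k + Σ_j v_j ∂_j v_k = −∂_k p − g·δ_{kn} for every 1 ≤ k ≤ n, together with Σ_j ∂_j v_j = 0 on U. Define w_k = ∂_t ∂_k p + Σ_j v_j ∂_j ∂_k p for 1 ≤ k ≤ n (the material derivative of the pressure gradient). Then at every point of U: Σ_k ∂_k w_k = 3 Σ_{i,j} ∂_i ∂_j p · ∂_j v_i + 2 Σ_{i,j,k} ∂_i v_j · ∂_j v_k · ∂_k v_i. -/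
open Set

variable {n : ℕ}

noncomputable def DD (u : ℝ × (Fin n → ℝ)) (f : ℝ × (Fin n → ℝ) → ℝ)
    (q : ℝ × (Fin n → ℝ)) : ℝ := fderiv ℝ f q u

lemma contDiff_DD {m : ℕ} {f : ℝ × (Fin n → ℝ) → ℝ} (u : ℝ × (Fin n → ℝ))
    (hf : ContDiff ℝ (m + 1 : ℕ) f) : ContDiff ℝ (m : ℕ) (DD u f) := by
  have h1 : ContDiff ℝ (m : ℕ) (fderiv ℝ f) := by
    apply hf.fderiv_right
    norm_cast
  exact h1.clm_apply contDiff_const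

lemma diff_DD {f : ℝ × (Fin n → ℝ) → ℝ} (u : ℝ × (Fin n → ℝ))
    (hf : ContDiff ℝ (2 : ℕ) f) : Differentiable ℝ (DD u f) :=
  (contDiff_DD (m := 1) u hf).differentiable (by norm_num)

lemma DD_swap {f : ℝ × (Fin n → ℝ) → ℝ} (hf : ContDiff ℝ (2 : ℕ) f)
    (u w q : ℝ × (Fin n → ℝ)) : DD u (DD w f) q = DD w (DD u f) q := by
  have hd : DifferentiableAt ℝ (fderiv ℝ f) q :=
    ((hf.fderiv_right (m := 1) (by norm_cast)).differentiable (by norm_num)) q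
  have hsym : IsSymmSndFDerivAt ℝ f q :=
    (hf.contDiffAt).isSymmSndFDerivAt (by simp)
  have e1 : ∀ z : ℝ × (Fin n → ℝ),
      fderiv ℝ (fun r => fderiv ℝ f r z) q = (fderiv ℝ (fderiv ℝ f) q).flip z := by
    intro z
    rw [fderiv_clm_apply hd (differentiableAt_const z)]
    simp
  show fderiv ℝ (fun r => fderiv ℝ f r w) q u = fderiv ℝ (fun r => fderiv ℝ f r u) q w
  rw [e1 w, e1 u]
  exact hsym u w

lemma DD_congr_on {U : Set (ℝ × (Fin n → ℝ))} (hU : IsOpen U)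
    {f g : ℝ × (Fin n → ℝ) → ℝ} (h : ∀ r ∈ U, f r = g r)
    {q : ℝ × (Fin n → ℝ)} (hq : q ∈ U) (u : ℝ × (Fin n → ℝ)) :
    DD u f q = DD u g q := by
  unfold DD
  rw [Filter.EventuallyEq.fderiv_eq (Filter.eventuallyEq_of_mem (hU.mem_nhds hq) h)]

noncomputable def matD (v : ℝ × (Fin n → ℝ) → Fin n → ℝ) (h : ℝ × (Fin n → ℝ) → ℝ)
    (r : ℝ × (Fin n → ℝ)) : ℝ :=
  DD (1, 0) h r + ∑ j, v r j * DD (0, Pi.single j 1) h r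

lemma contDiff_matD {v : ℝ × (Fin n → ℝ) → Fin n → ℝ} (hv : ContDiff ℝ (3 : ℕ) v)
    {h : ℝ × (Fin n → ℝ) → ℝ} (hh : ContDiff ℝ (3 : ℕ) h) :
    ContDiff ℝ (2 : ℕ) (matD v h) := by
  have h1 : ContDiff ℝ (2 : ℕ) (DD ((1 : ℝ), (0 : Fin n → ℝ)) h) := contDiff_DD _ hh
  refine h1.add (ContDiff.sum fun j _ => ?_)
  exact ((contDiff_pi.mp hv j).of_le (by norm_cast)).mul (contDiff_DD _ hh)

lemma DD_matD {v : ℝ × (Fin n → ℝ) → Fin n → ℝ} (hv : ContDiff ℝ (3 : ℕ) v)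
    {h : ℝ × (Fin n → ℝ) → ℝ} (hh : ContDiff ℝ (2 : ℕ) h)
    (u q : ℝ × (Fin n → ℝ)) :
    DD u (matD v h) q
      = DD u (DD (1, 0) h) q
        + ∑ j, (DD u (fun r => v r j) q * DD (0, Pi.single j 1) h q
            + v q j * DD u (DD (0, Pi.single j 1) h) q) := by
  have hvj : ∀ j, Differentiable ℝ (fun r => v r j) := fun j =>
    (contDiff_pi.mp hv j).differentiable (by norm_cast)
  have hdh : ∀ w, Differentiable ℝ (DD w h) := fun w => diff_DD w hh
  show fderiv ℝ (fun r => DD (1, 0) h r + ∑ j, v r j * DD (0, Pi.single j 1) h r) q u = _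
  rw [fderiv_fun_add ((hdh _) q)
    (DifferentiableAt.fun_sum fun j _ => ((hvj j q).fun_mul ((hdh _) q)))]
  rw [fderiv_fun_sum (fun j _ => ((hvj j q).fun_mul ((hdh _) q)))]
  simp only [ContinuousLinearMap.add_apply, ContinuousLinearMap.sum_apply]
  congr 1
  refine Finset.sum_congr rfl fun j _ => ?_
  rw [fderiv_fun_mul (hvj j q) ((hdh _) q)]
  simp only [ContinuousLinearMap.add_apply, ContinuousLinearMap.smul_apply, smul_eq_mul]
  ring_nf
  rfl

lemma DD_add {f g : ℝ × (Fin n → ℝ) → ℝ} {q : ℝ × (Fin n → ℝ)}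
    (hf : DifferentiableAt ℝ f q) (hg : DifferentiableAt ℝ g q) (u : ℝ × (Fin n → ℝ)) :
    DD u (fun r => f r + g r) q = DD u f q + DD u g q := by
  unfold DD; rw [fderiv_fun_add hf hg]; rfl

lemma DD_mul {f g : ℝ × (Fin n → ℝ) → ℝ} {q : ℝ × (Fin n → ℝ)}
    (hf : DifferentiableAt ℝ f q) (hg : DifferentiableAt ℝ g q) (u : ℝ × (Fin n → ℝ)) :
    DD u (fun r => f r * g r) q = f q * DD u g q + g q * DD u f q := by
  unfold DD; rw [fderiv_fun_mul hf hg]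
  simp only [ContinuousLinearMap.add_apply, ContinuousLinearMap.smul_apply, smul_eq_mul]

lemma DD_sum {ι : Type*} {s : Finset ι} {F : ι → ℝ × (Fin n → ℝ) → ℝ} {q : ℝ × (Fin n → ℝ)}
    (h : ∀ i ∈ s, DifferentiableAt ℝ (F i) q) (u : ℝ × (Fin n → ℝ)) :
    DD u (fun r => ∑ i ∈ s, F i r) q = ∑ i ∈ s, DD u (F i) q := by
  unfold DD; rw [fderiv_fun_sum h, ContinuousLinearMap.sum_apply]

lemma contDiff_DD_DD {f : ℝ × (Fin n → ℝ) → ℝ} (u w : ℝ × (Fin n → ℝ))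
    (hf : ContDiff ℝ (3 : ℕ) f) : ContDiff ℝ (1 : ℕ) (DD u (DD w f)) :=
  contDiff_DD u (contDiff_DD (m := 2) w hf)

lemma DD_DD_matD {v : ℝ × (Fin n → ℝ) → Fin n → ℝ} (hv : ContDiff ℝ (3 : ℕ) v)
    {h : ℝ × (Fin n → ℝ) → ℝ} (hh : ContDiff ℝ (3 : ℕ) h)
    (u w q : ℝ × (Fin n → ℝ)) :
    DD u (DD w (matD v h)) q
      = DD u (DD w (DD (1, 0) h)) q
        + ∑ j, (DD u (DD w (fun r => v r j)) q * DD (0, Pi.single j 1) h q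
            + DD w (fun r => v r j) q * DD u (DD (0, Pi.single j 1) h) q
            + DD u (fun r => v r j) q * DD w (DD (0, Pi.single j 1) h) q
            + v q j * DD u (DD w (DD (0, Pi.single j 1) h)) q) := by
  have hvj : ∀ j, ContDiff ℝ (2 : ℕ) (fun r => v r j) := fun j =>
    (contDiff_pi.mp hv j).of_le (by norm_cast)
  have hfun : DD w (matD v h)
      = fun r => DD w (DD (1, 0) h) r
          + ∑ j, (DD w (fun z => v z j) r * DD (0, Pi.single j 1) h r
              + v r j * DD w (DD (0, Pi.single j 1) h) r) :=
    funext fun r => DD_matD hv (hh.of_le (by norm_cast)) w r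
  rw [hfun]
  have d0 : DifferentiableAt ℝ (DD w (DD (1, 0) h)) q := (contDiff_DD_DD w (1, 0) hh).differentiable (by norm_num) q
  have d1 : ∀ j, DifferentiableAt ℝ (DD w (fun z => v z j)) q := fun j =>
    diff_DD w (hvj j) q
  have d2 : ∀ j, DifferentiableAt ℝ (DD (0, Pi.single j 1) h) q := fun j =>
    diff_DD _ (hh.of_le (by norm_cast)) q
  have d3 : ∀ j, DifferentiableAt ℝ (DD w (DD (0, Pi.single j 1) h)) q := fun j =>
    (contDiff_DD_DD w _ hh).differentiable (by norm_num) q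
  have dv : ∀ j, DifferentiableAt ℝ (fun r => v r j) q := fun j =>
    ((hvj j).differentiable (by norm_cast)) q
  rw [DD_add d0 (DifferentiableAt.fun_sum fun j _ =>
    (((d1 j).fun_mul (d2 j)).fun_add ((dv j).fun_mul (d3 j)))) u]
  rw [DD_sum (fun j _ => ((d1 j).fun_mul (d2 j)).fun_add ((dv j).fun_mul (d3 j))) u]
  congr 1
  refine Finset.sum_congr rfl fun j _ => ?_
  rw [DD_add ((d1 j).fun_mul (d2 j)) ((dv j).fun_mul (d3 j)) u,
    DD_mul (d1 j) (d2 j) u, DD_mul (dv j) (d3 j) u]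
  ring

lemma DD_swap3_12 {f : ℝ × (Fin n → ℝ) → ℝ} (hf : ContDiff ℝ (3 : ℕ) f)
    (u w z q : ℝ × (Fin n → ℝ)) :
    DD u (DD w (DD z f)) q = DD w (DD u (DD z f)) q :=
  DD_swap (contDiff_DD (m := 2) z hf) u w q

lemma DD_swap3_23 {f : ℝ × (Fin n → ℝ) → ℝ} (hf : ContDiff ℝ (3 : ℕ) f)
    (u w z q : ℝ × (Fin n → ℝ)) :
    DD u (DD w (DD z f)) q = DD u (DD z (DD w f)) q := by
  rw [show DD w (DD z f) = DD z (DD w f) from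
    funext fun r => DD_swap (hf.of_le (by norm_cast)) w z r]

lemma sum_cyc {M : Type*} [AddCommMonoid M] (f : Fin n → Fin n → Fin n → M) :
    ∑ i, ∑ j, ∑ k, f i j k = ∑ j, ∑ k, ∑ i, f i j k := by
  rw [Finset.sum_comm]
  exact Finset.sum_congr rfl fun j _ => Finset.sum_comm

lemma sum_swap13 {M : Type*} [AddCommMonoid M] (f : Fin n → Fin n → Fin n → M) :
    ∑ i, ∑ j, ∑ k, f i j k = ∑ k, ∑ j, ∑ i, f i j k := by
  rw [sum_cyc]
  exact Finset.sum_comm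

lemma key_algebra_s9 {n : ℕ} (V ta ctt : Fin n → ℝ)
    (sa tbA tbB cA cB : Fin n → Fin n → ℝ)
    (sb cC : Fin n → Fin n → Fin n → ℝ)
    (hsym_tb : ∀ i k, tbA i k = tbB i k)
    (hsym_sb : ∀ i j k, sb i j k = sb j i k)
    (hdiv_s : ∀ i, ∑ k, sb i k k = 0)
    (hz1 : ∑ k, ctt k = 0)
    (hz2 : ∀ j, ∑ k, cA j k = 0)
    (hz3 : ∀ j, ∑ k, cB j k = 0)
    (hz4 : ∀ j m, ∑ k, cC j m k = 0) :
    ∑ k, (-(ctt k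
          + ∑ j, (tbA k j * sa j k + ta j * sb k j k + sa k j * tbB j k + V j * cA j k))
        + ∑ j, (sa k j * -(tbA j k + ∑ m, (sa j m * sa m k + V m * sb j m k))
            + V j * -(cB j k + ∑ m, (sb k j m * sa m k + sa j m * sb k m k
                + sa k m * sb j m k + V m * cC j m k))))
      = 3 * ∑ i, ∑ j, -(tbA i j + ∑ m, (sa i m * sa m j + V m * sb i m j)) * sa j i
        + 2 * ∑ i, ∑ j, ∑ k, sa i j * sa j k * sa k i := by
  have hsbk : ∀ j, ∑ k, sb k j k = 0 := fun j => by
    have h : ∑ k, sb k j k = ∑ k, sb j k k :=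
      Finset.sum_congr rfl fun k _ => hsym_sb k j k
    rw [h]; exact hdiv_s j
  have z3 : ∑ k, ∑ j, ta j * sb k j k = 0 := by
    rw [Finset.sum_comm]
    refine Finset.sum_eq_zero fun j _ => ?_
    rw [← Finset.mul_sum, hsbk j, mul_zero]
  have z5 : ∑ k, ∑ j, V j * cA j k = 0 := by
    rw [Finset.sum_comm]
    refine Finset.sum_eq_zero fun j _ => ?_
    rw [← Finset.mul_sum, hz2 j, mul_zero]
  have z9 : ∑ k, ∑ j, V j * cB j k = 0 := by
    rw [Finset.sum_comm]
    refine Finset.sum_eq_zero fun j _ => ?_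
    rw [← Finset.mul_sum, hz3 j, mul_zero]
  have z11 : ∑ k, ∑ j, ∑ m, V j * (sa j m * sb k m k) = 0 := by
    rw [sum_cyc]
    refine Finset.sum_eq_zero fun j _ => Finset.sum_eq_zero fun m _ => ?_
    rw [← Finset.mul_sum, ← Finset.mul_sum, hsbk m, mul_zero, mul_zero]
  have z13 : ∑ k, ∑ j, ∑ m, V j * (V m * cC j m k) = 0 := by
    rw [sum_cyc]
    refine Finset.sum_eq_zero fun j _ => Finset.sum_eq_zero fun m _ => ?_
    rw [← Finset.mul_sum, ← Finset.mul_sum, hz4 j m, mul_zero, mul_zero]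
  have e4 : ∑ k, ∑ j, sa k j * tbB j k = ∑ k, ∑ j, tbA k j * sa j k := by
    rw [Finset.sum_comm]
    refine Finset.sum_congr rfl fun a _ => Finset.sum_congr rfl fun b _ => ?_
    rw [hsym_tb a b]; ring
  have e6 : ∑ k, ∑ j, sa k j * tbA j k = ∑ k, ∑ j, tbA k j * sa j k := by
    rw [Finset.sum_comm]
    refine Finset.sum_congr rfl fun a _ => Finset.sum_congr rfl fun b _ => ?_
    ring
  have e8 : ∑ k, ∑ j, ∑ m, sa k j * (V m * sb j m k)
      = ∑ k, ∑ j, ∑ m, V j * (sa k m * sb j m k) := by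
    refine Finset.sum_congr rfl fun a _ => ?_
    rw [Finset.sum_comm]
    refine Finset.sum_congr rfl fun b _ => Finset.sum_congr rfl fun c _ => ?_
    rw [hsym_sb c b a]; ring
  have e10 : ∑ k, ∑ j, ∑ m, V j * (sb k j m * sa m k)
      = ∑ k, ∑ j, ∑ m, V j * (sa k m * sb j m k) := by
    rw [sum_swap13]
    refine Finset.sum_congr rfl fun a _ => Finset.sum_congr rfl fun b _ =>
      Finset.sum_congr rfl fun c _ => ?_
    rw [hsym_sb c b a]; ring
  have eD : ∑ i, ∑ j, ∑ m, sa i m * sa m j * sa j i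
      = ∑ k, ∑ j, ∑ m, sa k j * (sa j m * sa m k) := by
    refine Finset.sum_congr rfl fun a _ => ?_
    rw [Finset.sum_comm]
    refine Finset.sum_congr rfl fun b _ => Finset.sum_congr rfl fun c _ => ?_
    ring
  have eC : ∑ i, ∑ j, ∑ k, 2 * (sa i j * sa j k * sa k i)
      = 2 * ∑ k, ∑ j, ∑ m, sa k j * (sa j m * sa m k) := by
    rw [Finset.mul_sum]
    refine Finset.sum_congr rfl fun a _ => ?_
    rw [Finset.mul_sum]
    refine Finset.sum_congr rfl fun b _ => ?_
    rw [Finset.mul_sum]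
    refine Finset.sum_congr rfl fun c _ => ?_
    ring
  have eE : ∑ i, ∑ j, ∑ m, V m * sb i m j * sa j i
      = ∑ k, ∑ j, ∑ m, V j * (sa k m * sb j m k) := by
    rw [sum_cyc]
    refine Finset.sum_congr rfl fun a _ => Finset.sum_congr rfl fun b _ =>
      Finset.sum_congr rfl fun c _ => ?_
    rw [hsym_sb c b a]; ring
  have c3S : ∑ k, ∑ j, 3 * (tbA k j * sa j k) = 3 * ∑ k, ∑ j, tbA k j * sa j k := by
    simp [Finset.mul_sum]
  have c3D : ∑ i, ∑ j, ∑ k, 3 * (sa i k * sa k j * sa j i)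
      = 3 * ∑ i, ∑ j, ∑ m, sa i m * sa m j * sa j i := by
    simp [Finset.mul_sum]
  have c3E : ∑ i, ∑ j, ∑ k, 3 * (V k * sb i k j * sa j i)
      = 3 * ∑ i, ∑ j, ∑ m, V m * sb i m j * sa j i := by
    simp [Finset.mul_sum]
  simp only [neg_add, mul_add, mul_neg, Finset.mul_sum, add_mul, neg_mul, Finset.sum_mul,
    Finset.sum_add_distrib, Finset.sum_neg_distrib]
  linarith [hz1, z3, z5, z9, z11, z13, e4, e6, e8, e10, eD, eC, eE, c3S, c3D, c3E]

lemma expand_p {v : ℝ × (Fin n → ℝ) → Fin n → ℝ} (hv : ContDiff ℝ (3 : ℕ) v)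
    {p : ℝ × (Fin n → ℝ) → ℝ} (hp : ContDiff ℝ (3 : ℕ) p) :
    ∀ (k : Fin n) (u q : ℝ × (Fin n → ℝ)),
      DD u (matD v (DD (0, Pi.single k 1) p)) q
        = DD u (DD (1, 0) (DD (0, Pi.single k 1) p)) q
          + ∑ j, (DD u (fun r => v r j) q * DD (0, Pi.single j 1) (DD (0, Pi.single k 1) p) q
              + v q j * DD u (DD (0, Pi.single j 1) (DD (0, Pi.single k 1) p)) q) :=
  fun k u q => DD_matD hv (contDiff_DD (m := 2) _ hp) u q

lemma expand_vd {v : ℝ × (Fin n → ℝ) → Fin n → ℝ} (hv : ContDiff ℝ (3 : ℕ) v) :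
    ∀ (k : Fin n) (u q : ℝ × (Fin n → ℝ)),
      DD u (matD v (fun r => v r k)) q
        = DD u (DD (1, 0) (fun r => v r k)) q
          + ∑ j, (DD u (fun r => v r j) q * DD (0, Pi.single j 1) (fun r => v r k) q
              + v q j * DD u (DD (0, Pi.single j 1) (fun r => v r k)) q) :=
  fun k u q => DD_matD hv ((contDiff_pi.mp hv k).of_le (by norm_cast)) u q

lemma expand_vdd {v : ℝ × (Fin n → ℝ) → Fin n → ℝ} (hv : ContDiff ℝ (3 : ℕ) v) :
    ∀ (k : Fin n) (u w q : ℝ × (Fin n → ℝ)),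
      DD u (DD w (matD v (fun r => v r k))) q
        = DD u (DD w (DD (1, 0) (fun r => v r k))) q
          + ∑ j, (DD u (DD w (fun r => v r j)) q * DD (0, Pi.single j 1) (fun r => v r k) q
              + DD w (fun r => v r j) q * DD u (DD (0, Pi.single j 1) (fun r => v r k)) q
              + DD u (fun r => v r j) q * DD w (DD (0, Pi.single j 1) (fun r => v r k)) q
              + v q j * DD u (DD w (DD (0, Pi.single j 1) (fun r => v r k))) q) :=
  fun k u w q => DD_DD_matD hv (contDiff_pi.mp hv k) u w q

theorem aux_euler {n : ℕ} (U : Set (ℝ × (Fin n → ℝ))) (hU : IsOpen U)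
    (v : ℝ × (Fin n → ℝ) → Fin n → ℝ) (p : ℝ × (Fin n → ℝ) → ℝ) (c : Fin n → ℝ)
    (hv : ContDiff ℝ (3 : ℕ) v) (hp : ContDiff ℝ (3 : ℕ) p)
    (heuler : ∀ q ∈ U, ∀ k : Fin n,
      matD v (fun r => v r k) q = -DD (0, Pi.single k 1) p q - c k)
    (hdiv : ∀ q ∈ U, ∑ j, DD (0, Pi.single j 1) (fun r => v r j) q = 0) :
    ∀ q ∈ U,
      ∑ k, DD (0, Pi.single k 1) (matD v (DD (0, Pi.single k 1) p)) q
        = 3 * ∑ i, ∑ j, DD (0, Pi.single i 1) (DD (0, Pi.single j 1) p) q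
              * DD (0, Pi.single j 1) (fun r => v r i) q
          + 2 * ∑ i, ∑ j, ∑ k, DD (0, Pi.single i 1) (fun r => v r j) q
              * DD (0, Pi.single j 1) (fun r => v r k) q
              * DD (0, Pi.single k 1) (fun r => v r i) q := by
  intro q hq
  have hvk : ∀ k, ContDiff ℝ (3 : ℕ) (fun r => v r k) := fun k => contDiff_pi.mp hv k
  -- first derivatives of p on U in terms of v
  have hP2 : ∀ (k : Fin n) (u : ℝ × (Fin n → ℝ)) (r) (_ : r ∈ U),
      DD u (DD (0, Pi.single k 1) p) r = -DD u (matD v (fun z => v z k)) r := by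
    intro k u r hr
    have hloc : ∀ s ∈ U, DD (0, Pi.single k 1) p s = -matD v (fun z => v z k) s - c k := by
      intro s hs
      have := heuler s hs k
      linarith
    rw [DD_congr_on hU hloc hr u]
    show fderiv ℝ (fun s => -matD v (fun z => v z k) s - c k) r u = _
    rw [fderiv_sub_const, fderiv_fun_neg]
    simp [DD]
  have hP2q : ∀ (k : Fin n) (u : ℝ × (Fin n → ℝ)),
      DD u (DD (0, Pi.single k 1) p) q = -DD u (matD v (fun z => v z k)) q :=
    fun k u => hP2 k u q hq
  have hP3q : ∀ (k : Fin n) (w u : ℝ × (Fin n → ℝ)),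
      DD u (DD w (DD (0, Pi.single k 1) p)) q
        = -DD u (DD w (matD v (fun z => v z k))) q := by
    intro k w u
    rw [DD_congr_on hU (fun s hs => hP2 k w s hs) hq u]
    show fderiv ℝ (fun s => -DD w (matD v fun z => v z k) s) q u = _
    rw [fderiv_fun_neg]
    simp [DD]
  -- divergence-free consequences
  have hdiv1 : ∀ (u : ℝ × (Fin n → ℝ)) (r) (_ : r ∈ U),
      ∑ j, DD u (DD (0, Pi.single j 1) (fun z => v z j)) r = 0 := by
    intro u r hr
    have hdiff : ∀ j ∈ Finset.univ, DifferentiableAt ℝ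
        (DD ((0 : ℝ), Pi.single j (1:ℝ)) (fun z => v z j)) r := fun j _ =>
      (diff_DD _ ((hvk j).of_le (by norm_cast))) r
    rw [← DD_sum hdiff u, DD_congr_on hU (fun s hs => hdiv s hs) hr u]
    simp [DD]
  have hdiv2 : ∀ (u w : ℝ × (Fin n → ℝ)),
      ∑ j, DD u (DD w (DD (0, Pi.single j 1) (fun z => v z j))) q = 0 := by
    intro u w
    have hdiff : ∀ j ∈ Finset.univ, DifferentiableAt ℝ
        (DD w (DD ((0 : ℝ), Pi.single j (1:ℝ)) (fun z => v z j))) q := fun j _ =>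
      ((contDiff_DD_DD w _ (hvk j)).differentiable (by norm_num)) q
    rw [← DD_sum hdiff u, DD_congr_on hU (fun s hs => hdiv1 w s hs) hq u]
    simp [DD]
  -- rewrite everything in terms of derivatives of v
  simp only [expand_p hv hp, hP3q, hP2q, expand_vdd hv, expand_vd hv]
  -- apply the algebraic identity
  exact key_algebra_s9 (fun j => v q j) (fun j => DD (1, 0) (fun r => v r j) q)
    (fun k => DD (0, Pi.single k 1) (DD (1, 0) (DD (1, 0) (fun r => v r k))) q)
    (fun a b => DD (0, Pi.single a 1) (fun r => v r b) q)
    (fun a b => DD (0, Pi.single a 1) (DD (1, 0) (fun r => v r b)) q)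
    (fun a b => DD (1, 0) (DD (0, Pi.single a 1) (fun r => v r b)) q)
    (fun a b => DD (0, Pi.single b 1) (DD (1, 0) (DD (0, Pi.single a 1) (fun r => v r b))) q)
    (fun a b => DD (0, Pi.single b 1) (DD (0, Pi.single a 1) (DD (1, 0) (fun r => v r b))) q)
    (fun a b c => DD (0, Pi.single a 1) (DD (0, Pi.single b 1) (fun r => v r c)) q)
    (fun a b c => DD (0, Pi.single c 1) (DD (0, Pi.single a 1)
      (DD (0, Pi.single b 1) (fun r => v r c))) q)
    (fun i k => DD_swap ((hvk k).of_le (by norm_cast)) (0, Pi.single i 1) (1, 0) q)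
    (fun i j k => DD_swap ((hvk k).of_le (by norm_cast)) (0, Pi.single i 1) (0, Pi.single j 1) q)
    (fun i => hdiv1 (0, Pi.single i 1) q hq)
    ((Finset.sum_congr rfl fun k _ => by
      beta_reduce
      rw [DD_swap3_12 (hvk k) (0, Pi.single k 1) (1, 0) (1, 0) q,
        DD_swap3_23 (hvk k) (1, 0) (0, Pi.single k 1) (1, 0) q]).trans (hdiv2 (1, 0) (1, 0)))
    (fun j => (Finset.sum_congr rfl fun k _ => by
      beta_reduce
      rw [DD_swap3_12 (hvk k) (0, Pi.single k 1) (1, 0) (0, Pi.single j 1) q,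
        DD_swap3_23 (hvk k) (1, 0) (0, Pi.single k 1) (0, Pi.single j 1) q]).trans
      (hdiv2 (1, 0) (0, Pi.single j 1)))
    (fun j => (Finset.sum_congr rfl fun k _ => by
      beta_reduce
      rw [DD_swap3_12 (hvk k) (0, Pi.single k 1) (0, Pi.single j 1) (1, 0) q,
        DD_swap3_23 (hvk k) (0, Pi.single j 1) (0, Pi.single k 1) (1, 0) q]).trans
      (hdiv2 (0, Pi.single j 1) (1, 0)))
    (fun j m => (Finset.sum_congr rfl fun k _ => by
      beta_reduce
      rw [DD_swap3_12 (hvk k) (0, Pi.single k 1) (0, Pi.single j 1) (0, Pi.single m 1) q,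
        DD_swap3_23 (hvk k) (0, Pi.single j 1) (0, Pi.single k 1) (0, Pi.single m 1) q]).trans
      (hdiv2 (0, Pi.single j 1) (0, Pi.single m 1)))


/-- Divergence of the material derivative of the pressure gradient of an incompressible
Euler flow: `∇·(D_t ∇p) = 3 tr(D²p·Dv) + 2 tr((Dv)³)`. -/
theorem div_material_derivative_pressure_gradient {n : ℕ} (hn : 1 ≤ n) (g : ℝ)
    (U : Set (ℝ × (Fin n → ℝ))) (hU : IsOpen U)
    (v : ℝ × (Fin n → ℝ) → Fin n → ℝ) (p : ℝ × (Fin n → ℝ) → ℝ)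
    (hv : ContDiff ℝ 3 v) (hp : ContDiff ℝ 3 p)
    (heuler : ∀ q ∈ U, ∀ k : Fin n,
      pdt (fun r => v r k) q + ∑ j, v q j * pdx j (fun r => v r k) q
        = -pdx k p q - (if (k : ℕ) = n - 1 then g else 0))
    (hdiv : ∀ q ∈ U, ∑ j, pdx j (fun r => v r j) q = 0) :
    ∀ q ∈ U,
      ∑ k, pdx k (fun r => pdt (pdx k p) r + ∑ j, v r j * pdx j (pdx k p) r) q
        = 3 * ∑ i, ∑ j, pdx i (pdx j p) q * pdx j (fun r => v r i) q
          + 2 * ∑ i, ∑ j, ∑ k, pdx i (fun r => v r j) q * pdx j (fun r => v r k) q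
              * pdx k (fun r => v r i) q := by
  have hv3 : ContDiff ℝ ((3 : ℕ) : WithTop ℕ∞) v := by exact_mod_cast hv
  have hp3 : ContDiff ℝ ((3 : ℕ) : WithTop ℕ∞) p := by exact_mod_cast hp
  exact aux_euler U hU v p (fun k => if (k : ℕ) = n - 1 then g else 0) hv3 hp3 heuler hdiv
end
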